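/- Let F be a field containing F_{p^e} and let z ∈ F. The following are equivalent: (a) the polynomial T^{p^e} - T - z is irreducible over F; (b) for all ζ ∈ F_{p^e}^*, the polynomial T^p - T - ζz is irreducible over F; (c) for all ζ ∈ F_{p^e}^*, the polynomial T^p - T - ζz has no root in F. -/

import Mathlib

set_option linter.unusedSectionVars false

open Polynomial Finset

section helpers

variable {p : ℕ} [Fact p.Prime]

/-- partial "trace" sum `x + x^p + ... + x^(p^(e-1))`. -/
def trS (p e : ℕ) {A : Type*} [CommSemiring A] (x : A) : A :=
  ∑ i ∈ Finset.range e, x ^ p ^ i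

lemma sum_shift {A : Type*} [CommRing A] (e : ℕ) (x : A) :
    (∑ i ∈ Finset.range e, x ^ p ^ (i + 1)) - (∑ i ∈ Finset.range e, x ^ p ^ i)
      = x ^ p ^ e - x ^ p ^ 0 := by
  induction e with
  | zero => simp
  | succ n ih =>
      rw [Finset.sum_range_succ, Finset.sum_range_succ]
      linear_combination ih

variable {A : Type*} [CommRing A] [CharP A p]

lemma trS_add (e : ℕ) (x y : A) : trS p e (x + y) = trS p e x + trS p e y := by
  unfold trS
  rw [← Finset.sum_add_distrib]
  exact Finset.sum_congr rfl fun i _ => add_pow_char_pow ..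

lemma trS_pow_sub (e : ℕ) (x : A) : trS p e x ^ p - trS p e x = x ^ p ^ e - x := by
  unfold trS
  rw [sum_pow_char]
  have h1 : ∀ i ∈ Finset.range e, (x ^ p ^ i) ^ p = x ^ p ^ (i + 1) := fun i _ => by
    rw [← pow_mul, ← pow_succ]
  rw [Finset.sum_congr rfl h1, sum_shift, pow_zero, pow_one]

lemma trS_map {B FF : Type*} [CommRing B] [FunLike FF A B] [RingHomClass FF A B]
    (ψ : FF) (e : ℕ) (x : A) :
    ψ (trS p e x) = trS p e (ψ x) := by
  unfold trS
  rw [map_sum]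
  exact Finset.sum_congr rfl fun i _ => map_pow ψ x _

end helpers

section rootcount

variable {p : ℕ} [Fact p.Prime]

lemma exists_preimage_of_pow_card {R L : Type*} [Field R] [Fintype R] [Field L] [DecidableEq L]
    (ψ : R →+* L) {x : L} (hx : x ^ Fintype.card R = x) : ∃ c : R, ψ c = x := by
  by_contra hc
  push_neg at hc
  set r := Fintype.card R with hr
  have hr1 : 1 < r := Fintype.one_lt_card
  set g : L[X] := X ^ r - X with hg
  have hgdeg : g.natDegree = r := FiniteField.X_pow_card_sub_X_natDegree_eq L hr1
  have hgne : g ≠ 0 := fun h => by simp [h] at hgdeg; omega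
  set Z : Finset L := insert x (Finset.univ.image ψ) with hZ
  have hZcard : Z.card = r + 1 := by
    rw [hZ, Finset.card_insert_of_notMem (by simpa using fun c => (hc c))]
    rw [Finset.card_image_of_injective _ ψ.injective, Finset.card_univ, add_comm]
  have hroots : Z.val ⊆ g.roots := by
    intro y hy
    rw [mem_roots hgne]
    have : y ^ r = y := by
      rcases Finset.mem_insert.mp hy with h | h
      · rw [h]; exact hx
      · obtain ⟨c, _, rfl⟩ := Finset.mem_image.mp h
        rw [← map_pow, FiniteField.pow_card]
    simp [hg, IsRoot, this]
  have := card_le_degree_of_subset_roots hroots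
  omega

/-- Nondegeneracy of the trace pairing on a finite field of cardinality `p^e`. -/
lemma trS_faithful {L : Type*} [Field L] [Fintype L] [CharP L p] {e : ℕ} (he : 0 < e)
    (hcard : Fintype.card L = p ^ e) {ζ : L} (h : ∀ w : L, trS p e (ζ * w) = 0) : ζ = 0 := by
  by_contra hζ
  set g : L[X] := ∑ i ∈ Finset.range e, C (ζ ^ p ^ i) * X ^ p ^ i with hg
  have hp1 : 1 < p := (Fact.out : p.Prime).one_lt
  have hcoeff : g.coeff (p ^ (e - 1)) = ζ ^ p ^ (e - 1) := by
    rw [hg, finset_sum_coeff]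
    rw [Finset.sum_eq_single (e - 1)]
    · rw [coeff_C_mul, coeff_X_pow]; simp
    · intro i hi hne
      have : p ^ i ≠ p ^ (e - 1) := fun hEq =>
        hne (Nat.pow_right_injective hp1 hEq)
      rw [coeff_C_mul, coeff_X_pow, if_neg (fun hh => this hh.symm), mul_zero]
    · intro hmem
      exact absurd (Finset.mem_range.mpr (by omega)) hmem
  have hgne : g ≠ 0 := by
    intro h0
    rw [h0, coeff_zero] at hcoeff
    exact pow_ne_zero _ hζ hcoeff.symm
  have hgdeg : g.natDegree ≤ p ^ (e - 1) := by
    apply (natDegree_sum_le _ _).trans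
    rw [Finset.fold_max_le]
    refine ⟨Nat.zero_le _, fun i hi => ?_⟩
    exact (natDegree_C_mul_le _ _).trans ((natDegree_X_pow _).le.trans
      (Nat.pow_le_pow_right hp1.le (by simp at hi; omega)))
  have hroots : (Finset.univ : Finset L).val ⊆ g.roots := by
    intro y _
    rw [mem_roots hgne]
    have : g.eval y = trS p e (ζ * y) := by
      rw [hg, eval_finset_sum]
      unfold trS
      exact Finset.sum_congr rfl fun i _ => by rw [eval_mul, eval_C, eval_pow, eval_X, mul_pow]
    simp [IsRoot, this, h y]
  have hle := card_le_degree_of_subset_roots hroots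
  rw [Finset.card_univ, hcard] at hle
  have : p ^ (e - 1) < p ^ e := Nat.pow_lt_pow_right hp1 (by omega)
  omega

end rootcount

section partC

variable {p : ℕ} [Fact p.Prime]

lemma pow_pow_eq_self {A : Type*} [CommRing A] {a : A} (ha : a ^ p = a) (i : ℕ) :
    a ^ p ^ i = a := by
  induction i with
  | zero => simp
  | succ n ih => rw [pow_succ, pow_mul, ih, ha]

lemma trS_fixed_mul {A : Type*} [CommRing A] (e : ℕ) {a : A} (ha : a ^ p = a) (u : A) :
    trS p e (a * u) = a * trS p e u := by
  unfold trS
  rw [Finset.mul_sum]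
  exact Finset.sum_congr rfl fun i _ => by rw [mul_pow, pow_pow_eq_self ha]

lemma trS_sub {A : Type*} [CommRing A] [CharP A p] (e : ℕ) (x y : A) :
    trS p e (x - y) = trS p e x - trS p e y := by
  have := trS_add (p := p) e (x - y) y
  rw [sub_add_cancel] at this
  rw [this]; ring

lemma natcard_module (K V : Type*) [Field K] [Finite K] [AddCommGroup V] [Module K V]
    [Finite V] : Nat.card V = Nat.card K ^ Module.finrank K V := by
  have : Fintype K := Fintype.ofFinite K
  have : Fintype V := Fintype.ofFinite V
  rw [Nat.card_eq_fintype_card, Nat.card_eq_fintype_card]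
  exact Module.card_eq_pow_finrank

lemma exists_ann (e : ℕ) (he : 0 < e) (W : Submodule (ZMod p) (GaloisField p e)) (hW : W ≠ ⊤) :
    ∃ ζ : GaloisField p e, ζ ≠ 0 ∧ ∀ x ∈ W, trS p e (ζ * x) = 0 := by
  classical
  have hp1 : 1 < p := (Fact.out : p.Prime).one_lt
  have hcardR : Nat.card (GaloisField p e) = p ^ e := GaloisField.card p e he.ne'
  have hFin : Fintype (GaloisField p e) := Fintype.ofFinite _
  have hpow : ∀ x : GaloisField p e, x ^ p ^ e = x := fun x => by
    have hc : Fintype.card (GaloisField p e) = p ^ e := by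
      rw [← Nat.card_eq_fintype_card, hcardR]
    rw [← hc]; exact FiniteField.pow_card x
  set P : Submodule (ZMod p) (GaloisField p e) :=
    { carrier := {x | x ^ p = x}
      add_mem' := fun {a b} ha hb => by
        simp only [Set.mem_setOf_eq] at *
        rw [add_pow_char, ha, hb]
      zero_mem' := by
        simp only [Set.mem_setOf_eq]
        exact zero_pow (Fact.out : p.Prime).ne_zero
      smul_mem' := fun c x hx => by
        simp only [Set.mem_setOf_eq] at *
        rw [Algebra.smul_def, mul_pow, hx, ← map_pow, ZMod.pow_card] } with hPdef
  have hmemP : ∀ u : GaloisField p e, trS p e u ∈ P := by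
    intro u
    show trS p e u ^ p = trS p e u
    have := trS_pow_sub (p := p) e u
    rw [hpow u, sub_self] at this
    exact sub_eq_zero.mp this
  have hPrange : (P : Set (GaloisField p e))
      = Set.range (algebraMap (ZMod p) (GaloisField p e)) := by
    apply Set.eq_of_subset_of_subset
    · intro x hx
      exact exists_preimage_of_pow_card (algebraMap (ZMod p) (GaloisField p e))
        (by rwa [ZMod.card])
    · rintro x ⟨c, rfl⟩
      show (algebraMap (ZMod p) (GaloisField p e) c) ^ p = _
      rw [← map_pow, ZMod.pow_card]
  have hcardP : Nat.card P = p := by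
    have h0 : Nat.card (↑P : Set (GaloisField p e))
        = Nat.card (Set.range (algebraMap (ZMod p) (GaloisField p e))) :=
      Nat.card_congr (Equiv.setCongr hPrange)
    rw [Nat.card_range_of_injective (algebraMap (ZMod p) (GaloisField p e)).injective,
      Nat.card_zmod] at h0
    exact h0
  have hfP : Module.finrank (ZMod p) P = 1 := by
    have h1 := natcard_module (ZMod p) P
    rw [hcardP, Nat.card_zmod] at h1
    nth_rewrite 1 [← pow_one p] at h1
    exact (Nat.pow_right_injective hp1 h1).symm
  -- cardinality of W
  have hWle : Nat.card W < p ^ e := by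
    have hle : Nat.card W ≤ Nat.card (GaloisField p e) :=
      Nat.card_le_card_of_injective _ Subtype.val_injective
    rcases lt_or_eq_of_le hle with h | h
    · omega
    · exfalso
      apply hW
      have hbij := (Nat.bijective_iff_injective_and_card
        (Subtype.val : W → GaloisField p e)).mpr ⟨Subtype.val_injective, h⟩
      ext x
      simp only [Submodule.mem_top, iff_true]
      obtain ⟨⟨y, hy⟩, rfl⟩ := hbij.surjective x
      exact hy
  -- the linear maps
  have hΘmem : ∀ (ζ : GaloisField p e) (x : GaloisField p e), trS p e (ζ * x) ∈ P :=
    fun ζ x => hmemP _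
  set Θ : GaloisField p e → (W →ₗ[ZMod p] P) := fun ζ =>
    { toFun := fun x => ⟨trS p e (ζ * (x : GaloisField p e)), hΘmem ζ x⟩
      map_add' := fun x y => by
        ext
        show trS p e (ζ * ((x : GaloisField p e) + y)) = _
        rw [mul_add, trS_add]
        rfl
      map_smul' := fun c x => by
        ext
        show trS p e (ζ * ((c • x : W) : GaloisField p e)) = _
        have h1 : ((c • x : W) : GaloisField p e) = algebraMap (ZMod p) _ c * x := by
          rw [Submodule.coe_smul, Algebra.smul_def]
        have h2 : (algebraMap (ZMod p) (GaloisField p e) c) ^ p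
            = algebraMap (ZMod p) (GaloisField p e) c := by
          rw [← map_pow, ZMod.pow_card]
        rw [h1, mul_left_comm, trS_fixed_mul e h2]
        show _ = ((c • ⟨trS p e (ζ * (x : GaloisField p e)), _⟩ : P) : GaloisField p e)
        rw [Submodule.coe_smul, Algebra.smul_def] } with hΘdef
  have hfinM : Finite (W →ₗ[ZMod p] P) :=
    Finite.of_injective (fun f => (f : W → P)) DFunLike.coe_injective
  have hcardM : Nat.card (W →ₗ[ZMod p] P) < p ^ e := by
    have h1 := natcard_module (ZMod p) (W →ₗ[ZMod p] P)
    rw [Module.finrank_linearMap, hfP, mul_one, Nat.card_zmod] at h1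
    have h2 := natcard_module (ZMod p) W
    rw [Nat.card_zmod] at h2
    rw [h1, ← h2]
    exact hWle
  have hnotinj : ¬ Function.Injective Θ := by
    intro hinj
    have := Nat.card_le_card_of_injective Θ hinj
    omega
  rw [Function.not_injective_iff] at hnotinj
  obtain ⟨ζ₁, ζ₂, hΘeq, hne⟩ := hnotinj
  refine ⟨ζ₁ - ζ₂, sub_ne_zero_of_ne hne, fun x hx => ?_⟩
  have := congrArg (fun f => ((f ⟨x, hx⟩ : P) : GaloisField p e)) hΘeq
  simp only [hΘdef] at this
  rw [sub_mul, trS_sub]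
  rw [show trS p e (ζ₁ * x) = trS p e (ζ₂ * x) from this]
  ring

end partC

section core

open IntermediateField

lemma GF_pow_card (p e : ℕ) [Fact p.Prime] (he : 0 < e) (x : GaloisField p e) :
    x ^ p ^ e = x := by
  have : Fintype (GaloisField p e) := Fintype.ofFinite _
  have hc : Fintype.card (GaloisField p e) = p ^ e := by
    rw [← Nat.card_eq_fintype_card, GaloisField.card p e he.ne']
  rw [← hc]; exact FiniteField.pow_card x

theorem artinSchreier_core (p e : ℕ) [Fact p.Prime] (he : 0 < e) (F : Type*) [Field F]
    (φ : GaloisField p e →+* F) (z : F) :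
    Irreducible ((X : F[X]) ^ p ^ e - X - C z) ↔
      ∀ ζ : GaloisField p e, ζ ≠ 0 → ¬∃ y : F, y ^ p - y = φ ζ * z := by
  classical
  have hp1 : 1 < p := (Fact.out : p.Prime).one_lt
  have hq1 : 1 < p ^ e := Nat.one_lt_pow he.ne' hp1
  haveI : CharP F p := charP_of_injective_ringHom φ.injective p
  set f : F[X] := X ^ p ^ e - X - C z with hf
  have hfeq : f = X ^ p ^ e - ((X : F[X]) + C z) := by rw [hf]; ring
  have hfm : f.Monic := by
    rw [hfeq]
    apply monic_X_pow_sub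
    calc ((X : F[X]) + C z).degree ≤ max (X : F[X]).degree (C z).degree := degree_add_le _ _
    _ ≤ 1 := by
        apply max_le
        · rw [degree_X]
        · exact (degree_C_le).trans (by norm_num)
    _ < (p ^ e : ℕ) := by exact_mod_cast hq1
  have hfd : f.natDegree = p ^ e := by
    rw [hf, natDegree_sub_C, FiniteField.X_pow_card_sub_X_natDegree_eq F hq1]
  have hfne : f ≠ 0 := hfm.ne_zero
  have hq0 : ((p ^ e : ℕ) : F) = 0 := by
    push_cast
    rw [CharP.cast_eq_zero F p, zero_pow he.ne']
  have hfsep : f.Separable := by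
    have hd : derivative f = -1 := by
      rw [hf, derivative_sub, derivative_sub, derivative_X_pow, derivative_X, derivative_C, hq0,
        map_zero, zero_mul]
      ring
    rw [separable_def, hd]
    exact ⟨0, -1, by ring⟩
  set K := f.SplittingField with hK
  haveI : CharP K p := charP_of_injective_ringHom (algebraMap F K).injective p
  have hsplits : Splits (f.map (algebraMap F K)) := SplittingField.splits f
  obtain ⟨α, hα⟩ := hsplits.exists_eval_eq_zero
    (by rw [degree_map, degree_eq_natDegree hfne, hfd]; exact_mod_cast (by omega : (p^e : ℕ) ≠ 0))
  rw [eval_map] at hα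
  have hroot_eq : ∀ β : K, eval₂ (algebraMap F K) β f = β ^ p ^ e - β - algebraMap F K z := by
    intro β
    simp only [hf, eval₂_sub, eval₂_pow, eval₂_X, eval₂_C]
  have hαq : α ^ p ^ e - α = algebraMap F K z := by
    rw [hroot_eq α] at hα
    linear_combination hα
  set ψ : GaloisField p e →+* K := (algebraMap F K).comp φ with hψ
  have hψinj : Function.Injective ψ := ψ.injective
  have hψα : ∀ c : GaloisField p e, ψ c = algebraMap F K (φ c) := fun c => rfl
  have hψpow : ∀ c : GaloisField p e, (ψ c) ^ p ^ e = ψ c := fun c => by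
    rw [← map_pow, GF_pow_card p e he]
  haveI hFinGF : Fintype (GaloisField p e) := Fintype.ofFinite _
  have hcardGF : Fintype.card (GaloisField p e) = p ^ e := by
    rw [← Nat.card_eq_fintype_card, GaloisField.card p e he.ne']
  have hrootdesc : ∀ β : K, eval₂ (algebraMap F K) β f = 0 → ∃ c, β = α + ψ c := by
    intro β hβ
    rw [hroot_eq β] at hβ
    have hβq : β ^ p ^ e - β = algebraMap F K z := by linear_combination hβ
    have hfix : (β - α) ^ p ^ e = β - α := by
      rw [sub_pow_char_pow]
      linear_combination hβq - hαq
    obtain ⟨c, hc⟩ := exists_preimage_of_pow_card ψ (by rwa [hcardGF])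
    exact ⟨c, by linear_combination -hc⟩
  haveI : FiniteDimensional F K := by infer_instance
  have hαint : IsIntegral F α := IsIntegral.of_finite F α
  have haev : aeval α f = 0 := by rw [aeval_def]; exact hα
  have hAdjTop : Algebra.adjoin F {α} = ⊤ := by
    rw [eq_top_iff, ← SplittingField.adjoin_rootSet f]
    apply Algebra.adjoin_le
    intro x hx
    rw [mem_rootSet] at hx
    obtain ⟨c, rfl⟩ := hrootdesc x (by rw [← aeval_def]; exact hx.2)
    exact add_mem (Algebra.subset_adjoin rfl)
      ((Algebra.adjoin F {α}).algebraMap_mem (φ c))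
  haveI : IsGalois F K := IsGalois.of_separable_splitting_field hfsep
  have hFKrank : Module.finrank F K = (minpoly F α).natDegree := by
    have h2 : F⟮α⟯ = ⊤ := by
      apply IntermediateField.toSubalgebra_injective
      rw [adjoin_simple_toSubalgebra_of_isAlgebraic hαint.isAlgebraic, hAdjTop]
      rfl
    rw [← IntermediateField.adjoin.finrank hαint, h2, IntermediateField.finrank_top']
  have hmdvd : minpoly F α ∣ f := minpoly.dvd F α haev
  have hconj : ∀ σ : K ≃ₐ[F] K, ∃ c : GaloisField p e, σ α = α + ψ c := by
    intro σ
    apply hrootdesc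
    rw [← aeval_def, aeval_algHom_apply σ α f]
    simp [haev]
  choose w hw using hconj
  have hw1 : w 1 = 0 := by
    apply hψinj
    have h1 := hw 1
    simp only [AlgEquiv.one_apply] at h1
    rw [map_zero]
    linear_combination -h1
  have hwmul : ∀ σ τ, w (σ * τ) = w σ + w τ := by
    intro σ τ
    apply hψinj
    rw [map_add]
    have h1 := hw (σ * τ)
    rw [AlgEquiv.mul_apply, hw τ, map_add, hw σ] at h1
    have h2 : σ (ψ (w τ)) = ψ (w τ) := by rw [hψα, AlgEquiv.commutes]
    rw [h2] at h1
    linear_combination -h1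
  have hwinj : Function.Injective w := by
    intro σ τ hwe
    have hατ : σ α = τ α := by rw [hw σ, hw τ, hwe]
    have hle : Algebra.adjoin F ({α} : Set K) ≤ AlgHom.equalizer σ.toAlgHom τ.toAlgHom :=
      Algebra.adjoin_le (by rintro x (rfl : x = α); exact hατ)
    rw [hAdjTop] at hle
    exact AlgEquiv.ext fun x =>
      (AlgHom.mem_equalizer σ.toAlgHom τ.toAlgHom x).mp (hle Algebra.mem_top)
  -- the Artin-Schreier elements
  have hβ : ∀ ζ : GaloisField p e,
      trS p e (ψ ζ * α) ^ p - trS p e (ψ ζ * α) = ψ ζ * algebraMap F K z := by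
    intro ζ
    rw [trS_pow_sub (p := p) e, mul_pow, hψpow ζ, ← mul_sub, hαq]
  have hσβ : ∀ (σ : K ≃ₐ[F] K) (ζ : GaloisField p e),
      σ (trS p e (ψ ζ * α)) = trS p e (ψ ζ * α) + ψ (trS p e (ζ * w σ)) := by
    intro σ ζ
    have h0 : σ (trS p e (ψ ζ * α)) = trS p e (σ (ψ ζ * α)) :=
      trS_map σ e (ψ ζ * α)
    have h2 : σ (ψ ζ) = ψ ζ := by rw [hψα, AlgEquiv.commutes]
    have h1 : σ (ψ ζ * α) = ψ ζ * α + ψ (ζ * w σ) := by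
      rw [map_mul, h2, hw σ, mul_add, map_mul]
    rw [h0, h1, trS_add (p := p) e, trS_map ψ e (ζ * w σ)]
  constructor
  · -- irreducible → no roots
    intro hirr ζ hζ hy
    obtain ⟨y, hy⟩ := hy
    have hmin : minpoly F α = f := (minpoly.eq_of_irreducible_of_monic hirr haev hfm).symm
    have hcardG : Nat.card (K ≃ₐ[F] K) = p ^ e := by
      rw [IsGalois.card_aut_eq_finrank F K, hFKrank, hmin, hfd]
    have hwsurj : Function.Surjective w :=
      ((Nat.bijective_iff_injective_and_card w).mpr
        ⟨hwinj, by rw [hcardG, GaloisField.card p e he.ne']⟩).surjective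
    have hβy : (trS p e (ψ ζ * α) - algebraMap F K y) ^ p
        = trS p e (ψ ζ * α) - algebraMap F K y := by
      rw [sub_pow_char]
      have h3 : (algebraMap F K y) ^ p - algebraMap F K y = ψ ζ * algebraMap F K z := by
        rw [← map_pow, ← map_sub, hy, map_mul, hψα]
      linear_combination hβ ζ - h3
    obtain ⟨c0, hc0⟩ := exists_preimage_of_pow_card (ZMod.castHom (dvd_refl p) K)
      (by rwa [ZMod.card])
    have hcast : (ZMod.castHom (dvd_refl p) K) c0
        = algebraMap F K ((ZMod.castHom (dvd_refl p) F) c0) := by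
      rw [ZMod.castHom_apply, ZMod.castHom_apply, ← ZMod.natCast_val, ← ZMod.natCast_val,
        map_natCast]
    have hβF : trS p e (ψ ζ * α)
        = algebraMap F K (y + (ZMod.castHom (dvd_refl p) F) c0) := by
      rw [map_add, ← hcast]
      linear_combination -hc0
    have htr0 : ∀ σ : K ≃ₐ[F] K, trS p e (ζ * w σ) = 0 := by
      intro σ
      have h4 := hσβ σ ζ
      rw [hβF, AlgEquiv.commutes] at h4
      apply hψinj
      rw [map_zero]
      linear_combination -h4
    apply hζ
    apply trS_faithful (p := p) he hcardGF
    intro x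
    obtain ⟨σ, rfl⟩ := hwsurj x
    exact htr0 σ
  · -- no roots → irreducible
    intro hno
    by_contra hni
    have hmle : (minpoly F α).natDegree ≤ p ^ e := by
      rw [← hfd]; exact natDegree_le_of_dvd hmdvd hfne
    have hmne : (minpoly F α).natDegree ≠ p ^ e := by
      intro heq
      apply hni
      have hmf : minpoly F α = f :=
        eq_of_monic_of_associated (minpoly.monic hαint) hfm
          (associated_of_dvd_of_natDegree_le hmdvd hfne (by rw [heq, hfd]))
      rw [← hmf]
      exact minpoly.irreducible hαint
    have hcardG : Nat.card (K ≃ₐ[F] K) < p ^ e := by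
      rw [IsGalois.card_aut_eq_finrank F K, hFKrank]
      omega
    have haddcl : ∀ x y : GaloisField p e,
        x ∈ Set.range w → y ∈ Set.range w → x + y ∈ Set.range w := by
      rintro _ _ ⟨σ, rfl⟩ ⟨τ, rfl⟩
      exact ⟨σ * τ, (hwmul σ τ)⟩
    have hnsmulcl : ∀ (n : ℕ) (x : GaloisField p e),
        x ∈ Set.range w → n • x ∈ Set.range w := by
      intro n
      induction n with
      | zero => intro x _; rw [zero_smul]; exact ⟨1, hw1⟩
      | succ m ih =>
          intro x hx
          rw [succ_nsmul]
          exact haddcl _ _ (ih x hx) hx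
    set W : Submodule (ZMod p) (GaloisField p e) :=
      { carrier := Set.range w
        add_mem' := fun {a b} ha hb => haddcl a b ha hb
        zero_mem' := ⟨1, hw1⟩
        smul_mem' := fun c x hx => by
          have h5 : c = ((c.val : ℕ) : ZMod p) := by
            rw [ZMod.natCast_val, ZMod.cast_id]
          rw [h5, Nat.cast_smul_eq_nsmul]
          exact hnsmulcl _ _ hx } with hWdef
    have hWle : Nat.card W ≤ Nat.card (K ≃ₐ[F] K) := by
      apply Nat.card_le_card_of_surjective (fun σ : K ≃ₐ[F] K => (⟨w σ, ⟨σ, rfl⟩⟩ : W))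
      rintro ⟨x, σ, rfl⟩
      exact ⟨σ, rfl⟩
    have hWne : W ≠ ⊤ := by
      intro htop
      have h6 : Nat.card W = p ^ e := by
        rw [htop]
        rw [Nat.card_congr Submodule.topEquiv.toEquiv, GaloisField.card p e he.ne']
      omega
    obtain ⟨ζ, hζ0, hζtr⟩ := exists_ann e he W hWne
    have hfix : ∀ σ : K ≃ₐ[F] K, σ (trS p e (ψ ζ * α)) = trS p e (ψ ζ * α) := by
      intro σ
      rw [hσβ σ ζ, hζtr (w σ) ⟨σ, rfl⟩, map_zero, add_zero]
    have hfixed : IntermediateField.fixedField (⊤ : Subgroup (K ≃ₐ[F] K)) = ⊥ :=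
      OrderIso.map_bot (@IsGalois.intermediateFieldEquivSubgroup F _ K _ _ _ inferInstance).symm
    have hβmem : trS p e (ψ ζ * α) ∈ (⊥ : IntermediateField F K) := by
      rw [← hfixed]
      rintro ⟨σ, -⟩
      exact hfix σ
    obtain ⟨y, hy⟩ := IntermediateField.mem_bot.mp hβmem
    refine hno ζ hζ0 ⟨y, ?_⟩
    apply (algebraMap F K).injective
    rw [map_sub, map_pow, hy, map_mul, ← hψα]
    exact hβ ζ

end core

section final

lemma no_root_of_irreducible {F : Type*} [Field F] {g : F[X]} (hg : Irreducible g)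
    (hdeg : 2 ≤ g.natDegree) : ¬∃ y, g.IsRoot y := by
  rintro ⟨y, hy⟩
  obtain ⟨h, rfl⟩ := dvd_iff_isRoot.mpr hy
  rcases hg.isUnit_or_isUnit rfl with hu | hu
  · exact Polynomial.not_isUnit_X_sub_C y hu
  · rw [natDegree_mul (X_sub_C_ne_zero y) (fun h0 => by simp [h0] at hu),
      natDegree_X_sub_C, natDegree_eq_zero_of_isUnit hu] at hdeg
    omega

lemma eval_AS {F : Type*} [Field F] (n : ℕ) (a y : F) :
    ((X : F[X]) ^ n - X - C a).IsRoot y ↔ y ^ n - y = a := by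
  simp only [IsRoot, eval_sub, eval_pow, eval_X, eval_C]
  constructor
  · intro h'; linear_combination h'
  · intro h'; linear_combination h'

theorem stmt3 (p e : ℕ) [Fact p.Prime] (he : 0 < e) (F : Type*) [Field F]
    (φ : GaloisField p e →+* F) (z : F) :
    List.TFAE [
      Irreducible ((X : F[X]) ^ p ^ e - X - C z),
      ∀ ζ : (GaloisField p e)ˣ, Irreducible ((X : F[X]) ^ p - X - C (φ ↑ζ * z)),
      ∀ ζ : (GaloisField p e)ˣ, ¬ ∃ y : F, ((X : F[X]) ^ p - X - C (φ ↑ζ * z)).IsRoot y] := by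
  have hp1 : 1 < p := (Fact.out : p.Prime).one_lt
  haveI : CharP F p := charP_of_injective_ringHom φ.injective p
  tfae_have 1 → 3 := by
    intro h1 ζ hy
    obtain ⟨y, hy⟩ := hy
    exact ((artinSchreier_core p e he F φ z).mp h1) ζ ζ.ne_zero
      ⟨y, (eval_AS p (φ ↑ζ * z) y).mp hy⟩
  tfae_have 3 → 1 := by
    intro h3
    apply (artinSchreier_core p e he F φ z).mpr
    intro ζ hζ hy
    obtain ⟨y, hy⟩ := hy
    exact h3 (Units.mk0 ζ hζ) ⟨y, (eval_AS p _ y).mpr hy⟩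
  tfae_have 2 → 3 := by
    intro h2 ζ
    apply no_root_of_irreducible (h2 ζ)
    rw [show ((X : F[X]) ^ p - X - C (φ ↑ζ * z))
        = (X : F[X]) ^ p ^ 1 - X - C (φ ↑ζ * z) by rw [pow_one]]
    have := FiniteField.X_pow_card_sub_X_natDegree_eq F hp1
    rw [pow_one, natDegree_sub_C, this]
    omega
  tfae_have 3 → 2 := by
    intro h3 ζ
    have hcore := artinSchreier_core p 1 one_pos F
      ((ZMod.castHom (dvd_refl p) F).comp (GaloisField.equivZmodP p).toAlgHom.toRingHom)
      (φ ↑ζ * z)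
    rw [pow_one] at hcore
    apply hcore.mpr
    intro c hc hy
    obtain ⟨y, hy⟩ := hy
    set a : ZMod p := GaloisField.equivZmodP p c with ha
    have ha0 : a ≠ 0 := fun h0 => hc ((GaloisField.equivZmodP p).injective
      (by rw [map_zero, ← ha]; exact h0))
    have hφ'c : ((ZMod.castHom (dvd_refl p) F).comp
        (GaloisField.equivZmodP p).toAlgHom.toRingHom) c = ((a.val : ℕ) : F) := by
      rw [RingHom.comp_apply, ZMod.castHom_apply, ← ZMod.natCast_val]
      rfl
    have hkne : ((a.val : ℕ) : GaloisField p e) ≠ 0 := by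
      rw [Ne, CharP.cast_eq_zero_iff (GaloisField p e) p]
      intro hdvd
      have hlt : a.val < p := ZMod.val_lt a
      have hne0 : a.val ≠ 0 := fun h0 => ha0 (by
        have := ZMod.natCast_val (R := ZMod p) a
        rw [ZMod.cast_id] at this
        rw [← this, h0, Nat.cast_zero])
      exact hne0 (Nat.eq_zero_of_dvd_of_lt hdvd hlt)
    have hζ'' : ((a.val : ℕ) : GaloisField p e) * ↑ζ ≠ 0 :=
      mul_ne_zero hkne ζ.ne_zero
    apply h3 (Units.mk0 _ hζ'')
    refine ⟨y, (eval_AS p _ y).mpr ?_⟩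
    rw [hy, hφ'c]
    rw [Units.val_mk0, map_mul, map_natCast]
    ring
  tfae_finish

end final
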